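/- With A = (δ₁−δ₁₂)(δ₂−δ₁₂)/(1−δ₁₂), one has A ≥ 0, D > 0, and the identity R₁* + R₂* + R₀ = ( (1−δ₁)(δ₂−δ₁₂) + (1−δ₂)(δ₁−δ₁₂) − A·R₀ ) / D; consequently, the total rate R₁* + R₂* + R₀ at the Case II corner point is a nonincreasing function of R₀. -/

import Mathlib

/-- With `A = (δ₁−δ₁₂)(δ₂−δ₁₂)/(1−δ₁₂)`, one has `A ≥ 0`, `D > 0`, the identity
`R₁* + R₂* + R₀ = ((1−δ₁)(δ₂−δ₁₂) + (1−δ₂)(δ₁−δ₁₂) − A·R₀)/D`, and the total rate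
at the Case II corner point is a nonincreasing function of `R₀`. -/
theorem caseII_total_rate_decreasing (δ₁ δ₂ δ₁₂ R₀ : ℝ)
    (h0 : 0 ≤ δ₁₂) (h1 : δ₁₂ ≤ δ₁) (h2 : δ₁ ≤ δ₂) (h3 : δ₂ < 1) (h4 : δ₁₂ < δ₂)
    (hR₀ : 0 ≤ R₀)
    (D : ℝ) (hD : D = (1 - δ₁₂) - (1 - δ₁) * (1 - δ₂) / (1 - δ₁₂))
    (R₁s R₂s : ℝ → ℝ)
    (hR₁ : ∀ r, R₁s r = ((1 - δ₁) * (δ₂ - δ₁₂) - (δ₁ - δ₁₂) * r) / D)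
    (hR₂ : ∀ r, R₂s r = ((1 - δ₂) * (δ₁ - δ₁₂) - (δ₂ - δ₁₂) * r) / D)
    (A : ℝ) (hA : A = (δ₁ - δ₁₂) * (δ₂ - δ₁₂) / (1 - δ₁₂)) :
    0 ≤ A ∧ 0 < D ∧
    R₁s R₀ + R₂s R₀ + R₀
      = ((1 - δ₁) * (δ₂ - δ₁₂) + (1 - δ₂) * (δ₁ - δ₁₂) - A * R₀) / D ∧
    Antitone (fun r : ℝ => R₁s r + R₂s r + r) := by
  have h12 : (0:ℝ) < 1 - δ₁₂ := by linarith
  have hAnn : 0 ≤ A := by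
    rw [hA]
    apply div_nonneg (mul_nonneg (by linarith) (by linarith)) (by linarith)
  have hDpos : 0 < D := by
    rw [hD]
    rw [sub_pos, div_lt_iff₀ h12]
    nlinarith
  have hDne : D ≠ 0 := ne_of_gt hDpos
  have key : ∀ r : ℝ, R₁s r + R₂s r + r
      = ((1 - δ₁) * (δ₂ - δ₁₂) + (1 - δ₂) * (δ₁ - δ₁₂) - A * r) / D := by
    intro r
    rw [hR₁, hR₂, hA]
    have hDef : D * (1 - δ₁₂) = (1 - δ₁₂)^2 - (1 - δ₁) * (1 - δ₂) := by
      rw [hD, sub_mul, div_mul_cancel₀ _ (ne_of_gt h12)]; ring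
    rw [eq_div_iff hDne, add_mul, add_mul, div_mul_cancel₀ _ hDne, div_mul_cancel₀ _ hDne]
    rw [hD]
    field_simp
    ring
  refine ⟨hAnn, hDpos, key R₀, ?_⟩
  intro a b hab
  simp only [key]
  rw [div_le_div_iff₀ hDpos hDpos]
  nlinarith [mul_le_mul_of_nonneg_left hab hAnn]
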